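/- Let K ≻ 0, λ > 0, and suppose X_⋆ ≻ 0 satisfies the first-order condition X_⋆^{-1} = (X_⋆ + m I_m)^{-1} + λ K^{-1}. Then for every symmetric matrix H, Tr(H X_⋆^{-1} H X_⋆^{-1}) − Tr(H (X_⋆ + m I_m)^{-1} H (X_⋆ + m I_m)^{-1}) ≥ 0. -/

import Mathlib

open Matrix

lemma my_trace_nonneg {n : ℕ} {M : Matrix (Fin n) (Fin n) ℝ} (hM : M.PosSemidef) :
    0 ≤ M.trace := by
  rw [Matrix.trace]
  apply Finset.sum_nonneg
  intro i _
  have := hM.dotProduct_mulVec_nonneg (Pi.single i 1)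
  simpa [dotProduct, Matrix.mulVec, Pi.single_apply, Finset.sum_ite_eq,
    Finset.sum_ite_eq'] using this

lemma my_trace_mul_nonneg {n : ℕ} {P Q : Matrix (Fin n) (Fin n) ℝ}
    (hP : P.PosSemidef) (hQ : Q.PosSemidef) : 0 ≤ (P * Q).trace := by
  obtain ⟨C, hC⟩ : ∃ C : Matrix (Fin n) (Fin n) ℝ, Q = Cᴴ * C := by
    open scoped MatrixOrder in
    obtain ⟨B, hB⟩ := CStarAlgebra.nonneg_iff_eq_star_mul_self.mp hQ.nonneg
    exact ⟨B, by simpa [star_eq_conjTranspose] using hB⟩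
  have h1 : (P * Q).trace = (C * P * Cᵀ).trace := by
    rw [hC, ← Matrix.mul_assoc, Matrix.trace_mul_comm, ← Matrix.mul_assoc,
      Matrix.conjTranspose_eq_transpose_of_trivial]
  rw [h1]
  have : (C * P * Cᵀ).PosSemidef := by
    have := hP.mul_mul_conjTranspose_same C
    rwa [Matrix.conjTranspose_eq_transpose_of_trivial] at this
  exact my_trace_nonneg this

lemma my_smul_posSemidef {n : ℕ} {M : Matrix (Fin n) (Fin n) ℝ} (hM : M.PosSemidef)
    {c : ℝ} (hc : 0 ≤ c) : (c • M).PosSemidef := by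
  refine PosSemidef.of_dotProduct_mulVec_nonneg ?_ (fun x => ?_)
  · unfold Matrix.IsHermitian
    rw [Matrix.conjTranspose_smul]
    rw [hM.1.eq]; simp
  · rw [Matrix.smul_mulVec, dotProduct_smul]
    simpa using mul_nonneg hc (hM.dotProduct_mulVec_nonneg x)

/-- If `X⋆ ≻ 0` satisfies the first-order condition
`X⋆⁻¹ = (X⋆ + m I)⁻¹ + λ K⁻¹` with `K ≻ 0`, `λ > 0`, then for every symmetric
`H`, `Tr(H X⋆⁻¹ H X⋆⁻¹) − Tr(H (X⋆+mI)⁻¹ H (X⋆+mI)⁻¹) ≥ 0`. -/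
theorem second_order_nonneg {m : ℕ}
    (K X : Matrix (Fin m) (Fin m) ℝ) (hK : K.PosDef) (l : ℝ) (hl : 0 < l)
    (hX : X.PosDef)
    (hfoc : X⁻¹ = (X + (m : ℝ) • 1)⁻¹ + l • K⁻¹)
    (H : Matrix (Fin m) (Fin m) ℝ) (hH : H.IsSymm) :
    Matrix.trace (H * X⁻¹ * H * X⁻¹) -
      Matrix.trace (H * (X + (m : ℝ) • 1)⁻¹ * H * (X + (m : ℝ) • 1)⁻¹) ≥ 0 := by
  set A := X⁻¹ with hA
  set B := (X + (m : ℝ) • 1)⁻¹ with hB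
  set D := l • K⁻¹ with hD
  -- positivity facts
  have hApsd : A.PosSemidef := hX.inv.posSemidef
  have hXm : (X + (m : ℝ) • 1).PosDef := by
    apply hX.add_posSemidef
    exact my_smul_posSemidef Matrix.PosSemidef.one (by positivity)
  have hBpsd : B.PosSemidef := hXm.inv.posSemidef
  have hDpsd : D.PosSemidef := my_smul_posSemidef hK.inv.posSemidef hl.le
  -- H is hermitian (real symmetric)
  have hHh : Hᵀ = H := hH
  -- H * D * H and H * B * H are PSD
  have hHDH : (H * D * H).PosSemidef := by
    have := hDpsd.conjTranspose_mul_mul_same H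
    simpa [hHh] using this
  have hHDH' : (H * A * H).PosSemidef := by
    have := hApsd.conjTranspose_mul_mul_same H
    simpa [hHh] using this
  have key : H * A * H * A - H * B * H * B = (H * D * H) * A + (H * B * H) * D := by
    rw [hfoc]
    noncomm_ring
  have h1 : 0 ≤ ((H * D * H) * A).trace := my_trace_mul_nonneg hHDH hApsd
  have h2 : 0 ≤ ((H * B * H) * D).trace := by
    have hHBH : (H * B * H).PosSemidef := by
      have := hBpsd.conjTranspose_mul_mul_same H
      simpa [hHh] using this
    exact my_trace_mul_nonneg hHBH hDpsd
  have : Matrix.trace (H * A * H * A) - Matrix.trace (H * B * H * B)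
      = ((H * D * H) * A).trace + ((H * B * H) * D).trace := by
    rw [← Matrix.trace_sub, key, Matrix.trace_add]
  rw [ge_iff_le, this]
  exact add_nonneg h1 h2
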